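/- Let (X,d) be a bicomplete T₀-quasi-pseudometric space (i.e., the metric dˢ(x,y) = max{d(x,y),d(y,x)} is complete), φ : X → ℝ bounded from above, and ⪯̄ the order induced by φ via dˢ: x ⪯̄ y iff dˢ(x,y) ≤ φ(y) − φ(x). Let F : X × X → X be ⪯̄-preserving and dˢ-sequentially continuous. If there exist x₀, y₀ ∈ X with x₀ ⪯̄ F(x₀,y₀) and y₀ ⪯̄ F(y₀,x₀), then F has a coupled fixed point. -/

import Mathlib

open Filter

/-- Corollary 3.7: the symmetrized (bicomplete) version of the coupled fixed
point theorem, with the order induced by `φ` via `dˢ x y = max (d x y) (d y x)`. -/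
theorem coupled_fixed_point_bicomplete {X : Type*} (d : X → X → ℝ) (φ : X → ℝ)
    (hnn : ∀ x y, 0 ≤ d x y) (hrefl : ∀ x, d x x = 0)
    (htri : ∀ x y z, d x z ≤ d x y + d y z)
    (hT0 : ∀ x y, d x y = 0 → d y x = 0 → x = y)
    (hbicomplete : ∀ xs : ℕ → X,
      (∀ ε > (0 : ℝ), ∃ n₀, ∀ n k, n₀ ≤ n → n₀ ≤ k →
        max (d (xs n) (xs k)) (d (xs k) (xs n)) < ε) →
      ∃ a : X, Tendsto (fun n => max (d a (xs n)) (d (xs n) a)) atTop (nhds 0))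
    (hbdd : ∃ M : ℝ, ∀ x, φ x ≤ M)
    (F : X → X → X)
    (hpres : ∀ x y z w : X,
      max (d x z) (d z x) ≤ φ z - φ x → max (d y w) (d w y) ≤ φ w - φ y →
      max (d (F x y) (F z w)) (d (F z w) (F x y)) ≤ φ (F z w) - φ (F x y))
    (hcont : ∀ (xs ys : ℕ → X) (a b : X),
      Tendsto (fun n => max (d a (xs n)) (d (xs n) a)) atTop (nhds 0) →
      Tendsto (fun n => max (d b (ys n)) (d (ys n) b)) atTop (nhds 0) →
      Tendsto (fun n => max (d (F a b) (F (xs n) (ys n)))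
        (d (F (xs n) (ys n)) (F a b))) atTop (nhds 0))
    (x₀ y₀ : X)
    (hx₀ : max (d x₀ (F x₀ y₀)) (d (F x₀ y₀) x₀) ≤ φ (F x₀ y₀) - φ x₀)
    (hy₀ : max (d y₀ (F y₀ x₀)) (d (F y₀ x₀) y₀) ≤ φ (F y₀ x₀) - φ y₀) :
    ∃ a b : X, F a b = a ∧ F b a = b := by
  classical
  set D : X → X → ℝ := fun x y => max (d x y) (d y x) with hDdef
  have Dnn : ∀ x y, 0 ≤ D x y := fun x y => le_max_of_le_left (hnn x y)
  have Dsymm : ∀ x y, D x y = D y x := fun x y => max_comm _ _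
  have Dtri : ∀ x y z, D x z ≤ D x y + D y z := by
    intro x y z
    apply max_le
    · exact (htri x y z).trans (add_le_add (le_max_left _ _) (le_max_left _ _))
    · calc d z x ≤ d z y + d y x := htri z y x
        _ ≤ D y z + D x y := add_le_add (le_max_right _ _) (le_max_right _ _)
        _ = D x y + D y z := add_comm _ _
  -- the iteration sequence
  let p : ℕ → X × X := fun n => Nat.rec (x₀, y₀) (fun _ q => (F q.1 q.2, F q.2 q.1)) n
  set xs : ℕ → X := fun n => (p n).1 with hxs
  set ys : ℕ → X := fun n => (p n).2 with hys
  have hxsucc : ∀ n, xs (n + 1) = F (xs n) (ys n) := fun n => rfl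
  have hysucc : ∀ n, ys (n + 1) = F (ys n) (xs n) := fun n => rfl
  -- key step estimate
  have hstep : ∀ n, D (xs n) (xs (n + 1)) ≤ φ (xs (n + 1)) - φ (xs n) ∧
      D (ys n) (ys (n + 1)) ≤ φ (ys (n + 1)) - φ (ys n) := by
    intro n
    induction n with
    | zero => exact ⟨hx₀, hy₀⟩
    | succ n ih =>
      refine ⟨?_, ?_⟩
      · exact hpres (xs n) (ys n) (xs (n + 1)) (ys (n + 1)) ih.1 ih.2
      · exact hpres (ys n) (xs n) (ys (n + 1)) (xs (n + 1)) ih.2 ih.1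
  -- chain estimate for a general sequence satisfying the step estimate
  have chain : ∀ (u : ℕ → X),
      (∀ n, D (u n) (u (n + 1)) ≤ φ (u (n + 1)) - φ (u n)) →
      ∀ n k, D (u n) (u (n + k)) ≤ φ (u (n + k)) - φ (u n) := by
    intro u hu n k
    induction k with
    | zero => simp [hDdef, hrefl]
    | succ k ih =>
      calc D (u n) (u (n + (k + 1))) ≤ D (u n) (u (n + k)) + D (u (n + k)) (u (n + k + 1)) :=
            Dtri _ _ _
        _ ≤ (φ (u (n + k)) - φ (u n)) + (φ (u (n + k + 1)) - φ (u (n + k))) :=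
            add_le_add ih (hu (n + k))
        _ = φ (u (n + (k + 1))) - φ (u n) := by ring_nf
  -- a general Cauchy + limit argument
  have key : ∀ (u : ℕ → X),
      (∀ n, D (u n) (u (n + 1)) ≤ φ (u (n + 1)) - φ (u n)) →
      ∃ a : X, Tendsto (fun n => D a (u n)) atTop (nhds 0) := by
    intro u hu
    have hchain := chain u hu
    have hmono : Monotone (fun n => φ (u n)) :=
      monotone_nat_of_le_succ fun n => by linarith [Dnn (u n) (u (n + 1)), hu n]
    obtain ⟨M, hM⟩ := hbdd
    have hbdd' : BddAbove (Set.range fun n => φ (u n)) := ⟨M, by rintro _ ⟨n, rfl⟩; exact hM _⟩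
    have hconv : Tendsto (fun n => φ (u n)) atTop (nhds (⨆ n, φ (u n))) :=
      tendsto_atTop_ciSup hmono hbdd'
    have hcauchy : CauchySeq (fun n => φ (u n)) := hconv.cauchySeq
    apply hbicomplete
    intro ε hε
    obtain ⟨N, hN⟩ := Metric.cauchySeq_iff.mp hcauchy ε hε
    refine ⟨N, fun n k hn hk => ?_⟩
    have main : ∀ m l, N ≤ m → N ≤ l → m ≤ l → D (u m) (u l) < ε := by
      intro m l hm hl hml
      obtain ⟨j, rfl⟩ := Nat.exists_eq_add_of_le hml
      have := hchain m j
      have hd := hN (m + j) hl m hm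
      rw [Real.dist_eq] at hd
      have := le_abs_self (φ (u (m + j)) - φ (u m))
      linarith [hchain m j]
    rcases le_total n k with h | h
    · exact main n k hn hk h
    · rw [show (max (d (u n) (u k)) (d (u k) (u n)) : ℝ) = D (u k) (u n) from Dsymm _ _]
      exact main k n hk hn h
  obtain ⟨a, ha⟩ := key xs fun n => (hstep n).1
  obtain ⟨b, hb⟩ := key ys fun n => (hstep n).2
  have hFt := hcont xs ys a b ha hb
  -- D (F a b) a = 0
  have hshift : ∀ (c : X) (u : ℕ → X), Tendsto (fun n => D c (u n)) atTop (nhds 0) →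
      Tendsto (fun n => D (u (n + 1)) c) atTop (nhds 0) := by
    intro c u h
    have := h.comp (tendsto_add_atTop_nat 1)
    simpa [Function.comp_def, Dsymm] using this
  have keyfix : ∀ (c a' : X) (u : ℕ → X),
      Tendsto (fun n => D c (u (n + 1))) atTop (nhds 0) →
      Tendsto (fun n => D (u (n + 1)) a') atTop (nhds 0) → c = a' := by
    intro c a' u h1 h2
    have hsum : Tendsto (fun n => D c (u (n + 1)) + D (u (n + 1)) a') atTop (nhds 0) := by
      simpa using h1.add h2
    have hle : D c a' ≤ 0 :=
      le_of_tendsto_of_tendsto' tendsto_const_nhds hsum fun n => Dtri c (u (n + 1)) a'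
    have h0 : D c a' = 0 := le_antisymm hle (Dnn _ _)
    have h1' : d c a' = 0 :=
      le_antisymm (le_trans (le_max_left _ _) h0.le) (hnn _ _)
    have h2' : d a' c = 0 :=
      le_antisymm (le_trans (le_max_right _ _) h0.le) (hnn _ _)
    exact hT0 c a' h1' h2'
  have hFx : Tendsto (fun n => D (F a b) (xs (n + 1))) atTop (nhds 0) := by
    have : (fun n => D (F a b) (xs (n + 1))) = fun n => D (F a b) (F (xs n) (ys n)) := by
      funext n; rw [hxsucc]
    rw [this]; exact hFt
  have hFy : Tendsto (fun n => D (F b a) (ys (n + 1))) atTop (nhds 0) := by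
    have hFt' := hcont ys xs b a hb ha
    have : (fun n => D (F b a) (ys (n + 1))) = fun n => D (F b a) (F (ys n) (xs n)) := by
      funext n; rw [hysucc]
    rw [this]; exact hFt'
  exact ⟨a, b, keyfix (F a b) a xs hFx (hshift a xs ha),
    keyfix (F b a) b ys hFy (hshift b ys hb)⟩
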